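/- Let Y be a discrete random variable and S a finite set of discrete random variables with Y ∉ S. If X ∈ S is contained in at least one but not all Markov boundaries of Y within S, then X is conditionally independent of Y given S \ {X}; equivalently, the conditional mutual information CMI(X, Y | S \ {X}) equals 0, regardless of the joint distribution's other features. -/

import Mathlib

open scoped BigOperators

noncomputable section

/-- `p` is a probability mass function on the finite type `Ω`. -/
def IsDist {Ω : Type*} [Fintype Ω] (p : Ω → ℝ) : Prop :=
  (∀ w, 0 ≤ p w) ∧ ∑ w, p w = 1

/-- Total variation distance between two distributions on the same finite type. -/
def tvDist {Ω : Type*} [Fintype Ω] (p q : Ω → ℝ) : ℝ :=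
  (∑ w, |p w - q w|) / 2

variable {ι : Type*} [Fintype ι] [DecidableEq ι]
variable {α : ι → Type*} [∀ i, Fintype (α i)] [∀ i, DecidableEq (α i)]

/-- Marginal probability, under joint pmf `p`, of the event that the variables in the
collection `A` take the values prescribed by the configuration `x`. -/
def margProb (p : (∀ i, α i) → ℝ) (A : Finset ι) (x : ∀ i, α i) : ℝ :=
  ∑ w : ∀ i, α i, if ∀ i ∈ A, w i = x i then p w else 0

/-- Conditional independence of the collections `A` and `B` given the collection `C`:
`f(a, b | c) = f(a | c) f(b | c)` whenever `f(c) > 0` (stated in multiplied-out form). -/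
def CondIndep (p : (∀ i, α i) → ℝ) (A B C : Finset ι) : Prop :=
  ∀ x : ∀ i, α i, 0 < margProb p C x →
    margProb p (A ∪ B ∪ C) x * margProb p C x =
      margProb p (A ∪ C) x * margProb p (B ∪ C) x

/-- `M` is a Markov blanket of the variable `y` within the collection `T`. -/
def MarkovBlanket (p : (∀ i, α i) → ℝ) (y : ι) (T M : Finset ι) : Prop :=
  M ⊆ T ∧ CondIndep p {y} (T \ M) M

/-- `M` is a Markov boundary of `y` within `T`: a Markov blanket no proper subset of
which is a Markov blanket. -/
def MarkovBoundary (p : (∀ i, α i) → ℝ) (y : ι) (T M : Finset ι) : Prop :=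
  MarkovBlanket p y T M ∧ ∀ M' ⊂ M, ¬ MarkovBlanket p y T M'

/-- Mutual information between the collections `A` and `B`
(with the convention `0 · log(junk) = 0` on zero-probability terms). -/
def MI (p : (∀ i, α i) → ℝ) (A B : Finset ι) : ℝ :=
  ∑ w : ∀ i, α i, p w *
    Real.log (margProb p (A ∪ B) w / (margProb p A w * margProb p B w))

/-- Conditional mutual information between collections `A` and `B` given `C`
(with the convention `0 · log(junk) = 0` on zero-probability terms). -/
def CMI (p : (∀ i, α i) → ℝ) (A B C : Finset ι) : ℝ :=
  ∑ w : (∀ i, α i), p w *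
    Real.log ((margProb p (A ∪ B ∪ C) w * margProb p C w) /
      (margProb p (A ∪ C) w * margProb p (B ∪ C) w))


variable [∀ i, Nonempty (α i)]

lemma margProb_nonneg (p : (∀ i, α i) → ℝ) (hp : ∀ w, 0 ≤ p w) (A : Finset ι)
    (x : ∀ i, α i) : 0 ≤ margProb p A x := by
  refine Finset.sum_nonneg fun w _ => ?_
  split <;> [exact hp w; exact le_refl 0]

lemma margProb_mono (p : (∀ i, α i) → ℝ) (hp : ∀ w, 0 ≤ p w) {A B : Finset ι}
    (hAB : A ⊆ B) (x : ∀ i, α i) : margProb p B x ≤ margProb p A x := by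
  refine Finset.sum_le_sum fun w _ => ?_
  by_cases h : ∀ i ∈ B, w i = x i
  · rw [if_pos h, if_pos fun i hi => h i (hAB hi)]
  · rw [if_neg h]
    split <;> [exact hp w; exact le_refl 0]

lemma self_le_margProb (p : (∀ i, α i) → ℝ) (hp : ∀ w, 0 ≤ p w) (A : Finset ι)
    (w : ∀ i, α i) : p w ≤ margProb p A w := by
  have := Finset.single_le_sum (f := fun v : ∀ i, α i =>
      if ∀ i ∈ A, v i = w i then p v else 0)
    (fun v _ => by split <;> [exact hp v; exact le_refl 0]) (Finset.mem_univ w)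
  simpa [margProb] using this

lemma margProb_congr (p : (∀ i, α i) → ℝ) (A : Finset ι) {x x' : ∀ i, α i}
    (h : ∀ i ∈ A, x i = x' i) : margProb p A x = margProb p A x' := by
  refine Finset.sum_congr rfl fun w _ => ?_
  have : (∀ i ∈ A, w i = x i) ↔ (∀ i ∈ A, w i = x' i) := by
    constructor <;> intro hw i hi
    · rw [hw i hi, h i hi]
    · rw [hw i hi, h i hi]
  rw [if_congr this rfl rfl]

lemma margProb_sum_update (p : (∀ i, α i) → ℝ) {A : Finset ι} {X : ι} (hX : X ∈ A)
    (x : ∀ i, α i) :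
    ∑ t : α X, margProb p A (Function.update x X t) = margProb p (A.erase X) x := by
  unfold margProb
  rw [Finset.sum_comm]
  refine Finset.sum_congr rfl fun w _ => ?_
  have key : ∀ t : α X, (∀ i ∈ A, w i = Function.update x X t i) ↔
      (w X = t ∧ ∀ i ∈ A.erase X, w i = x i) := by
    intro t
    constructor
    · intro h
      refine ⟨by simpa using h X hX, fun i hi => ?_⟩
      have hine := Finset.ne_of_mem_erase hi
      have := h i (Finset.mem_of_mem_erase hi)
      rwa [Function.update_of_ne hine] at this
    · rintro ⟨h1, h2⟩ i hi
      by_cases hiX : i = X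
      · subst hiX; simpa using h1
      · rw [Function.update_of_ne hiX]
        exact h2 i (Finset.mem_erase.mpr ⟨hiX, hi⟩)
  calc ∑ t : α X, (if ∀ i ∈ A, w i = Function.update x X t i then p w else 0)
      = ∑ t : α X, (if w X = t then (if ∀ i ∈ A.erase X, w i = x i then p w else 0) else 0) := by
        refine Finset.sum_congr rfl fun t _ => ?_
        rw [if_congr (key t) rfl rfl]
        by_cases h1 : w X = t <;> by_cases h2 : ∀ i ∈ A.erase X, w i = x i <;>
          simp [h1, h2]
    _ = if ∀ i ∈ A.erase X, w i = x i then p w else 0 := by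
        rw [Finset.sum_ite_eq]
        simp

/-- Proposition 1(i): if `X` is contained in at least one but not all
Markov boundaries of `Y` within `S`, then `X ⊥ Y | S \ {X}`; equivalently
`CMI(X, Y | S \ {X}) = 0`. -/
theorem cmi_zero_of_markov_boundary_multiplicity
    (p : (∀ i, α i) → ℝ) (hp : IsDist p)
    (y X : ι) (S : Finset ι) (hyS : y ∉ S) (hXS : X ∈ S)
    (hin : ∃ M, MarkovBoundary p y S M ∧ X ∈ M)
    (hout : ∃ M, MarkovBoundary p y S M ∧ X ∉ M) :
    CondIndep p {X} {y} (S.erase X) ∧ CMI p {X} {y} (S.erase X) = 0 := by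
  obtain ⟨M, ⟨⟨hMS, hCI⟩, _⟩, hXM⟩ := hout
  obtain ⟨hp0, hp1⟩ := hp
  have hyX : y ≠ X := fun h => hyS (h ▸ hXS)
  have hMC : M ⊆ S.erase X := fun i hi =>
    Finset.mem_erase.mpr ⟨fun h => hXM (h ▸ hi), hMS hi⟩
  have hU2 : S \ M ∪ M = S := Finset.sdiff_union_of_subset hMS
  have hU1 : {y} ∪ (S \ M) ∪ M = insert y S := by
    rw [Finset.union_assoc, hU2, ← Finset.insert_eq]
  have hCI' : ∀ z, 0 < margProb p M z →
      margProb p (insert y S) z * margProb p M z =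
        margProb p (insert y M) z * margProb p S z := by
    intro z hz
    have := hCI z hz
    rwa [hU1, hU2, ← Finset.insert_eq] at this
  have hE1 : {X} ∪ {y} ∪ S.erase X = insert y S := by
    rw [Finset.union_assoc, ← Finset.insert_eq, ← Finset.insert_eq,
      Finset.insert_comm, Finset.insert_erase hXS]
  have hE2 : {X} ∪ S.erase X = S := by
    rw [← Finset.insert_eq, Finset.insert_erase hXS]
  have hE3 : {y} ∪ S.erase X = insert y (S.erase X) := (Finset.insert_eq y _).symm
  have CI : CondIndep p {X} {y} (S.erase X) := by
    intro x h0
    have hMx : 0 < margProb p M x := lt_of_lt_of_le h0 (margProb_mono p hp0 hMC x)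
    have hB := hCI' x hMx
    have hstep : ∀ t : α X,
        margProb p (insert y S) (Function.update x X t) * margProb p M x =
          margProb p (insert y M) x * margProb p S (Function.update x X t) := by
      intro t
      have hMeq : margProb p M (Function.update x X t) = margProb p M x :=
        margProb_congr p M fun i hi =>
          Function.update_of_ne (ne_of_mem_of_not_mem hi hXM) t x
      have hyMeq : margProb p (insert y M) (Function.update x X t) =
          margProb p (insert y M) x := by
        refine margProb_congr p _ fun i hi => ?_
        rcases Finset.mem_insert.mp hi with h | h
        · exact Function.update_of_ne (h ▸ hyX) t x
        · exact Function.update_of_ne (ne_of_mem_of_not_mem h hXM) t x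
      have := hCI' (Function.update x X t) (by rw [hMeq]; exact hMx)
      rwa [hMeq, hyMeq] at this
    have hA : margProb p (insert y (S.erase X)) x * margProb p M x =
        margProb p (insert y M) x * margProb p (S.erase X) x := by
      have h1 : ∑ t : α X,
          margProb p (insert y S) (Function.update x X t) * margProb p M x
          = ∑ t : α X,
          margProb p (insert y M) x * margProb p S (Function.update x X t) :=
        Finset.sum_congr rfl fun t _ => hstep t
      rw [← Finset.sum_mul, ← Finset.mul_sum,
        margProb_sum_update p (Finset.mem_insert_of_mem hXS) x,
        margProb_sum_update p hXS x, Finset.erase_insert_of_ne hyX] at h1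
      exact h1
    rw [hE1, hE2, hE3]
    refine mul_left_cancel₀ hMx.ne' ?_
    linear_combination margProb p (S.erase X) x * hB - margProb p S x * hA
  refine ⟨CI, ?_⟩
  refine Finset.sum_eq_zero fun w _ => ?_
  by_cases hw : p w = 0
  · rw [hw, zero_mul]
  · have hwpos : 0 < p w := lt_of_le_of_ne (hp0 w) (Ne.symm hw)
    have hC : 0 < margProb p (S.erase X) w :=
      lt_of_lt_of_le hwpos (self_le_margProb p hp0 _ w)
    have h1 : 0 < margProb p ({X} ∪ S.erase X) w :=
      lt_of_lt_of_le hwpos (self_le_margProb p hp0 _ w)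
    have h2 : 0 < margProb p ({y} ∪ S.erase X) w :=
      lt_of_lt_of_le hwpos (self_le_margProb p hp0 _ w)
    rw [CI w hC, div_self (mul_pos h1 h2).ne', Real.log_one, mul_zero]

end
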